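/- Assume in addition that $0<h_0(u)\le1$ for all $u\in[u_0,0)$ and that $\limsup_{u\to0^-}\big(1-h_0(u)\big)>0$ (i.e. $\frac{2m}{r}\nrightarrow0$ along $\underline{C}_0$). Then both $u\mapsto\Omega_0(u)^2h_0(u)$ and $u\mapsto\Omega_0(u)$ are nonincreasing on $[u_0,0)$ and both converge to $0$ as $u\to0^-$. -/

import Mathlib

open Set Filter

lemma stmt2_helper_anti {f f' : ℝ → ℝ} {s : Set ℝ} (hs : Convex ℝ s)
    (hf : ∀ x ∈ s, HasDerivAt f (f' x) x) (h' : ∀ x ∈ interior s, f' x ≤ 0) :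
    AntitoneOn f s := by
  apply antitoneOn_of_deriv_nonpos hs
  · exact fun x hx => (hf x hx).continuousAt.continuousWithinAt
  · exact fun x hx => ((hf x (interior_subset hx)).differentiableAt).differentiableWithinAt
  · intro x hx; rw [(hf x (interior_subset hx)).deriv]; exact h' x hx

lemma stmt2_helper_tendsto {f : ℝ → ℝ} {u0 : ℝ} (hu0 : u0 < 0)
    (hf : AntitoneOn f (Set.Ico u0 0)) (h0f : ∀ u ∈ Set.Ico u0 0, 0 ≤ f u) :
    Filter.Tendsto f (nhdsWithin 0 (Set.Ico u0 0)) (nhds (sInf (f '' Set.Ico u0 0))) := by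
  have hne : (f '' Set.Ico u0 0).Nonempty := ⟨f u0, ⟨u0, ⟨le_refl _, hu0⟩, rfl⟩⟩
  have hbd : BddBelow (f '' Set.Ico u0 0) := ⟨0, by rintro _ ⟨u, hu, rfl⟩; exact h0f u hu⟩
  rw [tendsto_order]
  constructor
  · intro b hb
    filter_upwards [self_mem_nhdsWithin] with u hu
    exact lt_of_lt_of_le hb (csInf_le hbd ⟨u, hu, rfl⟩)
  · intro b hb
    obtain ⟨_, ⟨v, hvS, rfl⟩, hvb⟩ := (csInf_lt_iff hbd hne).1 hb
    have hmem : Set.Ioi v ∈ nhdsWithin (0:ℝ) (Set.Ico u0 0) :=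
      mem_nhdsWithin_of_mem_nhds (Ioi_mem_nhds hvS.2)
    filter_upwards [self_mem_nhdsWithin, hmem] with u huS huv
    exact lt_of_le_of_lt (hf hvS huS (le_of_lt huv)) hvb

/-- On the incoming cone, with the ODEs
`(log Ω₀)' = -ψ²/(2(-u))` and `(Ω₀²h₀)' = -Ω₀²(1-h₀)/(-u)` on `[u₀,0)`,
`0 < h₀ ≤ 1`, and `limsup_{u→0⁻} (1 - h₀(u)) > 0`, both `Ω₀²h₀` and `Ω₀` are
nonincreasing on `[u₀,0)` and tend to `0` as `u → 0⁻`. -/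
theorem stmt_2 (u0 : ℝ) (hu0 : u0 < 0) (Ω0 h0 ψ : ℝ → ℝ)
    (hΩdiff : ∀ u ∈ Set.Ico u0 (0:ℝ), DifferentiableAt ℝ Ω0 u)
    (hhdiff : ∀ u ∈ Set.Ico u0 (0:ℝ), DifferentiableAt ℝ h0 u)
    (hψdiff : ∀ u ∈ Set.Ico u0 (0:ℝ), DifferentiableAt ℝ ψ u)
    (hΩpos : ∀ u ∈ Set.Ico u0 (0:ℝ), 0 < Ω0 u)
    (hode1 : ∀ u ∈ Set.Ico u0 (0:ℝ),
      HasDerivAt (fun v => Real.log (Ω0 v)) (-(ψ u ^ 2) / (2 * (-u))) u)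
    (hode2 : ∀ u ∈ Set.Ico u0 (0:ℝ),
      HasDerivAt (fun v => Ω0 v ^ 2 * h0 v) (-(Ω0 u ^ 2 * (1 - h0 u) / (-u))) u)
    (hh0 : ∀ u ∈ Set.Ico u0 (0:ℝ), 0 < h0 u ∧ h0 u ≤ 1)
    (hlimsup : 0 < Filter.limsup (fun u => 1 - h0 u) (nhdsWithin 0 (Set.Ico u0 0))) :
    AntitoneOn (fun u => Ω0 u ^ 2 * h0 u) (Set.Ico u0 0) ∧
    AntitoneOn Ω0 (Set.Ico u0 0) ∧
    Filter.Tendsto (fun u => Ω0 u ^ 2 * h0 u) (nhdsWithin 0 (Set.Ico u0 0)) (nhds 0) ∧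
    Filter.Tendsto Ω0 (nhdsWithin 0 (Set.Ico u0 0)) (nhds 0) := by
  -- derivative of Ω0
  have hΩ' : ∀ u ∈ Set.Ico u0 (0:ℝ), HasDerivAt Ω0 (Ω0 u * (-(ψ u ^ 2) / (2 * (-u)))) u := by
    intro u hu
    have hΩne : Ω0 u ≠ 0 := (hΩpos u hu).ne'
    have hd : HasDerivAt Ω0 (deriv Ω0 u) u := (hΩdiff u hu).hasDerivAt
    have hlog : HasDerivAt (fun v => Real.log (Ω0 v)) ((Ω0 u)⁻¹ * deriv Ω0 u) u :=
      (Real.hasDerivAt_log hΩne).comp u hd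
    have heq := hlog.unique (hode1 u hu)
    have : deriv Ω0 u = Ω0 u * (-(ψ u ^ 2) / (2 * (-u))) := by
      rw [← heq]; field_simp
    rw [← this]; exact hd
  -- derivative of h0
  have hh' : ∀ u ∈ Set.Ico u0 (0:ℝ),
      HasDerivAt h0 ((h0 u * ψ u ^ 2 - (1 - h0 u)) / (-u)) u := by
    intro u hu
    have hune : u ≠ 0 := hu.2.ne
    have hΩne : Ω0 u ≠ 0 := (hΩpos u hu).ne'
    have hd : HasDerivAt h0 (deriv h0 u) u := (hhdiff u hu).hasDerivAt
    have hg : HasDerivAt (fun v => Ω0 v ^ 2 * h0 v)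
        ((2 * Ω0 u ^ 1 * (Ω0 u * (-(ψ u ^ 2) / (2 * (-u))))) * h0 u + Ω0 u ^ 2 * deriv h0 u) u :=
      ((hΩ' u hu).pow 2).mul hd
    have heq := hg.unique (hode2 u hu)
    have : deriv h0 u = (h0 u * ψ u ^ 2 - (1 - h0 u)) / (-u) := by
      have h2 : Ω0 u ^ 2 ≠ 0 := pow_ne_zero 2 hΩne
      have hnu : (-u) ≠ 0 := neg_ne_zero.mpr hune
      field_simp [hune] at heq
      have key3 : u * (Ω0 u ^ 2 * (deriv h0 u * (-u)))
          = u * (Ω0 u ^ 2 * (h0 u * ψ u ^ 2 - (1 - h0 u))) := by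
        linear_combination (-u * Ω0 u ^ 2) * heq
      have key2 := mul_left_cancel₀ h2 (mul_left_cancel₀ hune key3)
      rw [eq_div_iff hnu]
      exact key2
    rw [← this]; exact hd
  -- derivative of the mass-type quantity
  have hm' : ∀ u ∈ Set.Ico u0 (0:ℝ),
      HasDerivAt (fun v => (-v) * (1 - h0 v)) (-(h0 u * ψ u ^ 2)) u := by
    intro u hu
    have hune : u ≠ 0 := hu.2.ne
    have := ((hasDerivAt_id u).neg.mul ((hasDerivAt_const u (1:ℝ)).sub (hh' u hu)))
    have e : (-u) * ((h0 u * ψ u ^ 2 - (1 - h0 u)) / (-u)) = h0 u * ψ u ^ 2 - (1 - h0 u) :=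
      mul_div_cancel₀ _ (neg_ne_zero.mpr hune)
    have e2 : -1 * (1 - h0 u) + (-u) * (0 - (h0 u * ψ u ^ 2 - (1 - h0 u)) / -u)
        = -(h0 u * ψ u ^ 2) := by
      linear_combination (-1:ℝ) * e
    exact this.congr_deriv e2
  have hIoo : ∀ x ∈ interior (Set.Ico u0 (0:ℝ)), x ∈ Set.Ico u0 (0:ℝ) := by
    intro x hx
    rw [interior_Ico] at hx
    exact ⟨hx.1.le, hx.2⟩
  -- antitonicity of g = Ω0²h0
  have hgA : AntitoneOn (fun u => Ω0 u ^ 2 * h0 u) (Set.Ico u0 0) := by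
    apply stmt2_helper_anti (convex_Ico u0 0) hode2
    intro x hx
    have hxS := hIoo x hx
    have hxneg : x < 0 := hxS.2
    have h1 : (0:ℝ) ≤ Ω0 x ^ 2 * (1 - h0 x) / (-x) :=
      div_nonneg (mul_nonneg (sq_nonneg _) (by linarith [(hh0 x hxS).2])) (by linarith)
    linarith
  -- antitonicity of Ω0
  have hΩA : AntitoneOn Ω0 (Set.Ico u0 0) := by
    apply stmt2_helper_anti (convex_Ico u0 0) hΩ'
    intro x hx
    have hxS := hIoo x hx
    have hxneg : x < 0 := hxS.2
    have h1 : -(ψ x ^ 2) / (2 * (-x)) ≤ 0 :=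
      div_nonpos_of_nonpos_of_nonneg (neg_nonpos.mpr (sq_nonneg _)) (by linarith)
    exact mul_nonpos_of_nonneg_of_nonpos (hΩpos x hxS).le h1
  -- antitonicity of the mass
  have hmA : AntitoneOn (fun v => (-v) * (1 - h0 v)) (Set.Ico u0 0) := by
    apply stmt2_helper_anti (convex_Ico u0 0) hm'
    intro x hx
    have hxS := hIoo x hx
    have := (hh0 x hxS).1
    nlinarith [sq_nonneg (ψ x)]
  -- nonnegativity
  have hgnn : ∀ u ∈ Set.Ico u0 (0:ℝ), 0 ≤ Ω0 u ^ 2 * h0 u :=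
    fun u hu => mul_nonneg (sq_nonneg _) (hh0 u hu).1.le
  have hΩnn : ∀ u ∈ Set.Ico u0 (0:ℝ), 0 ≤ Ω0 u := fun u hu => (hΩpos u hu).le
  set a := sInf (Ω0 '' Set.Ico u0 0) with ha_def
  set L := sInf ((fun u => Ω0 u ^ 2 * h0 u) '' Set.Ico u0 0) with hL_def
  have hΩtend : Filter.Tendsto Ω0 (nhdsWithin 0 (Set.Ico u0 0)) (nhds a) :=
    stmt2_helper_tendsto hu0 hΩA hΩnn
  have hgtend : Filter.Tendsto (fun u => Ω0 u ^ 2 * h0 u) (nhdsWithin 0 (Set.Ico u0 0)) (nhds L) :=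
    stmt2_helper_tendsto hu0 hgA hgnn
  have hΩbd : BddBelow (Ω0 '' Set.Ico u0 0) := ⟨0, by rintro _ ⟨u, hu, rfl⟩; exact hΩnn u hu⟩
  have hgbd : BddBelow ((fun u => Ω0 u ^ 2 * h0 u) '' Set.Ico u0 0) :=
    ⟨0, by rintro _ ⟨u, hu, rfl⟩; exact hgnn u hu⟩
  have hu0S : u0 ∈ Set.Ico u0 (0:ℝ) := ⟨le_refl _, hu0⟩
  have ha0 : 0 ≤ a := le_csInf ⟨Ω0 u0, ⟨u0, hu0S, rfl⟩⟩ (by rintro _ ⟨u, hu, rfl⟩; exact hΩnn u hu)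
  have hL0 : 0 ≤ L := le_csInf ⟨_, ⟨u0, hu0S, rfl⟩⟩ (by rintro _ ⟨u, hu, rfl⟩; exact hgnn u hu)
  have haL : ∀ u ∈ Set.Ico u0 (0:ℝ), a ≤ Ω0 u := fun u hu => csInf_le hΩbd ⟨u, hu, rfl⟩
  have hLle : ∀ u ∈ Set.Ico u0 (0:ℝ), L ≤ Ω0 u ^ 2 * h0 u := fun u hu => csInf_le hgbd ⟨u, hu, rfl⟩
  -- NeBot
  have hclos : (0:ℝ) ∈ closure (Set.Ico u0 0) := by
    rw [closure_Ico hu0.ne]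
    exact ⟨hu0.le, le_refl 0⟩
  haveI hNB : (nhdsWithin (0:ℝ) (Set.Ico u0 0)).NeBot := mem_closure_iff_nhdsWithin_neBot.mp hclos
  -- a = 0
  have ha : a = 0 := by
    by_contra hne0
    have hapos : 0 < a := lt_of_le_of_ne ha0 (Ne.symm hne0)
    set c := Filter.limsup (fun u => 1 - h0 u) (nhdsWithin 0 (Set.Ico u0 0)) with hc_def
    have hc : 0 < c := hlimsup
    -- pick u₁ with g u₁ < L + a²c/8
    have hε : (0:ℝ) < a ^ 2 * c / 8 := by positivity
    obtain ⟨_, ⟨u₁, hu₁S, rfl⟩, hu₁⟩ := (csInf_lt_iff hgbd ⟨_, ⟨u0, hu0S, rfl⟩⟩).1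
      (show L < L + a ^ 2 * c / 8 by linarith)
    -- frequently 1 - h0 v > c/2
    have hbdd : Filter.IsBoundedUnder (· ≥ ·) (nhdsWithin (0:ℝ) (Set.Ico u0 0))
        (fun u => 1 - h0 u) := by
      refine ⟨0, Filter.eventually_map.mpr ?_⟩
      filter_upwards [self_mem_nhdsWithin] with u hu
      linarith [(hh0 u hu).2]
    have hfreq : ∃ᶠ v in nhdsWithin (0:ℝ) (Set.Ico u0 0), c / 2 < 1 - h0 v :=
      Filter.frequently_lt_of_lt_limsup hbdd.isCoboundedUnder_le (by linarith)
    have hu₁neg : u₁ < 0 := hu₁S.2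
    have hev : ∀ᶠ v in nhdsWithin (0:ℝ) (Set.Ico u0 0), v ∈ Set.Ico u0 0 ∧ u₁ / 2 < v := by
      have h1 : ∀ᶠ v in nhdsWithin (0:ℝ) (Set.Ico u0 0), u₁ / 2 < v :=
        ((eventually_gt_nhds (show u₁ / 2 < 0 by linarith)).filter_mono nhdsWithin_le_nhds)
      filter_upwards [self_mem_nhdsWithin, h1] with v h1 h2 using ⟨h1, h2⟩
    obtain ⟨v, hvx, hvS, hvu⟩ := (hfreq.and_eventually hev).exists
    -- key barrier estimate on [2v, v]
    have hvneg : v < 0 := hvS.2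
    have h2vS : 2 * v ∈ Set.Ico u0 (0:ℝ) := ⟨by linarith [hu₁S.1], by linarith⟩
    have hIccS : Set.Icc (2 * v) v ⊆ Set.Ico u0 (0:ℝ) := fun x hx =>
      ⟨le_trans h2vS.1 hx.1, lt_of_le_of_lt hx.2 hvneg⟩
    set C := a ^ 2 * ((-v) * (1 - h0 v)) with hC_def
    have hmv0 : 0 ≤ (-v) * (1 - h0 v) :=
      mul_nonneg (by linarith) (by linarith [(hh0 v hvS).2])
    have hφ : ∀ x ∈ Set.Icc (2 * v) v,
        HasDerivAt (fun u => Ω0 u ^ 2 * h0 u - C * u⁻¹)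
          (-(Ω0 x ^ 2 * (1 - h0 x) / (-x)) - C * (-(x ^ 2)⁻¹)) x := by
      intro x hx
      have hxS := hIccS hx
      exact (hode2 x hxS).sub ((hasDerivAt_inv hxS.2.ne).const_mul C)
    have hφA : AntitoneOn (fun u => Ω0 u ^ 2 * h0 u - C * u⁻¹) (Set.Icc (2 * v) v) := by
      apply stmt2_helper_anti (convex_Icc _ _) hφ
      intro x hx
      rw [interior_Icc] at hx
      have hxIcc : x ∈ Set.Icc (2 * v) v := ⟨hx.1.le, hx.2.le⟩
      have hxS := hIccS hxIcc
      have hxneg : x < 0 := hxS.2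
      have hx2 : (0:ℝ) < x ^ 2 := pow_two_pos_of_ne_zero hxneg.ne
      have hΩx : a ≤ Ω0 x := haL x hxS
      have hΩsq : a ^ 2 ≤ Ω0 x ^ 2 := by nlinarith
      have hmx : (-v) * (1 - h0 v) ≤ (-x) * (1 - h0 x) := hmA hxS hvS hx.2.le
      have hC : C ≤ Ω0 x ^ 2 * ((-x) * (1 - h0 x)) :=
        mul_le_mul hΩsq hmx hmv0 (sq_nonneg _)
      have key : C * (x ^ 2)⁻¹ ≤ (Ω0 x ^ 2 * ((-x) * (1 - h0 x))) * (x ^ 2)⁻¹ :=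
        mul_le_mul_of_nonneg_right hC (inv_nonneg.2 hx2.le)
      have heq2 : (Ω0 x ^ 2 * ((-x) * (1 - h0 x))) * (x ^ 2)⁻¹
          = Ω0 x ^ 2 * (1 - h0 x) / (-x) := by
        field_simp [hxneg.ne]
      rw [heq2] at key
      linarith
    have hstep := hφA (Set.left_mem_Icc.2 (by linarith)) (Set.right_mem_Icc.2 (by linarith))
      (by linarith)
    simp only at hstep
    -- turn into gap estimate
    have hgap : Ω0 (2*v) ^ 2 * h0 (2*v) - Ω0 v ^ 2 * h0 v ≥ a ^ 2 * (1 - h0 v) / 2 := by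
      have hcalc : C * (2 * v)⁻¹ - C * v⁻¹ = a ^ 2 * (1 - h0 v) / 2 := by
        rw [hC_def]
        field_simp [hvneg.ne]
        ring
      linarith
    -- contradiction
    have hg2v : Ω0 (2*v) ^ 2 * h0 (2*v) ≤ Ω0 u₁ ^ 2 * h0 u₁ :=
      hgA hu₁S h2vS (by linarith)
    have hgvL : L ≤ Ω0 v ^ 2 * h0 v := hLle v hvS
    have ha2c : 0 < a ^ 2 * c := by positivity
    nlinarith [hvx, sq_nonneg a]
  -- conclude
  have hΩtend0 : Filter.Tendsto Ω0 (nhdsWithin 0 (Set.Ico u0 0)) (nhds 0) := ha ▸ hΩtend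
  have hsq : Filter.Tendsto (fun u => Ω0 u ^ 2) (nhdsWithin 0 (Set.Ico u0 0)) (nhds 0) := by
    have := hΩtend0.pow 2
    simpa using this
  have hgtend0 : Filter.Tendsto (fun u => Ω0 u ^ 2 * h0 u) (nhdsWithin 0 (Set.Ico u0 0)) (nhds 0) := by
    apply squeeze_zero'
      (by filter_upwards [self_mem_nhdsWithin] with u hu using hgnn u hu)
      (by filter_upwards [self_mem_nhdsWithin] with u hu using
        mul_le_of_le_one_right (sq_nonneg _) (hh0 u hu).2) hsq
  exact ⟨hgA, hΩA, hgtend0, hΩtend0⟩
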